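/- Suppose a, b, c are integers with gcd(a,b)=1, a^13 + b^13 = 3 c^p for a prime p ≥ 5, and ℓ is a prime dividing a^13 + b^13 with ℓ ≠ 3 and ℓ ≢ 1 (mod 13). Then ℓ divides a + b and p divides v_ℓ(a^13 + b^13). -/

import Mathlib

/-- If `gcd(a,b) = 1`, `a^13 + b^13 = 3 * c^p` for a prime `p ≥ 5`, and `ℓ` is a prime dividing
`a^13 + b^13` with `ℓ ≠ 3` and `ℓ ≢ 1 (mod 13)`, then `ℓ ∣ a + b` and
`p ∣ v_ℓ(a^13 + b^13)`. -/
theorem prime_dvd_sum_thirteen_powers (a b c : ℤ) (hab : IsCoprime a b) (p : ℕ)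
    (hp : p.Prime) (hp5 : 5 ≤ p) (heq : a ^ 13 + b ^ 13 = 3 * c ^ p)
    (ℓ : ℕ) (hℓ : ℓ.Prime) (h3 : ℓ ≠ 3) (h13 : ℓ % 13 ≠ 1)
    (hdvd : (ℓ : ℤ) ∣ a ^ 13 + b ^ 13) :
    (ℓ : ℤ) ∣ a + b ∧ p ∣ padicValInt ℓ (a ^ 13 + b ^ 13) := by
  haveI : Fact ℓ.Prime := ⟨hℓ⟩
  have hℓZ : Prime (ℓ : ℤ) := Int.prime_iff_natAbs_prime.mpr (by simpa using hℓ)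
  -- ℓ does not divide a and does not divide b
  have hnb : ¬ (ℓ : ℤ) ∣ b := by
    intro hb
    have ha : (ℓ : ℤ) ∣ a := by
      have : (ℓ : ℤ) ∣ a ^ 13 := by
        have := dvd_sub hdvd (Dvd.dvd.pow hb (by norm_num) : (ℓ:ℤ) ∣ b ^ 13)
        simpa using this
      exact hℓZ.dvd_of_dvd_pow this
    exact hℓZ.not_unit (hab.isUnit_of_dvd' ha hb)
  have hna : ¬ (ℓ : ℤ) ∣ a := by
    intro ha
    have hb : (ℓ : ℤ) ∣ b := by
      have : (ℓ : ℤ) ∣ b ^ 13 := by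
        have := dvd_sub hdvd (Dvd.dvd.pow ha (by norm_num) : (ℓ:ℤ) ∣ a ^ 13)
        simpa using this
      exact hℓZ.dvd_of_dvd_pow this
    exact hℓZ.not_unit (hab.isUnit_of_dvd' ha hb)
  -- Part 1 : ℓ ∣ a + b
  have part1 : (ℓ : ℤ) ∣ a + b := by
    have hb0 : (b : ZMod ℓ) ≠ 0 := by
      simpa [ZMod.intCast_zmod_eq_zero_iff_dvd] using hnb
    have ha0 : (a : ZMod ℓ) ≠ 0 := by
      simpa [ZMod.intCast_zmod_eq_zero_iff_dvd] using hna
    have hsum : ((a : ZMod ℓ)) ^ 13 + ((b : ZMod ℓ)) ^ 13 = 0 := by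
      have := (ZMod.intCast_zmod_eq_zero_iff_dvd (a ^ 13 + b ^ 13) ℓ).mpr hdvd
      push_cast at this
      exact this
    set u : ZMod ℓ := -((a : ZMod ℓ) * (b : ZMod ℓ)⁻¹) with hu
    have hu13 : u ^ 13 = 1 := by
      have hb13 : ((b : ZMod ℓ)) ^ 13 ≠ 0 := pow_ne_zero _ hb0
      have ha13 : ((a : ZMod ℓ)) ^ 13 = -((b : ZMod ℓ)) ^ 13 := by linear_combination hsum
      have hodd : Odd 13 := ⟨6, by norm_num⟩
      rw [hu, hodd.neg_pow, mul_pow, inv_pow, ha13, neg_mul, neg_neg, mul_inv_cancel₀ hb13]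
    have hord13 : orderOf u ∣ 13 := orderOf_dvd_of_pow_eq_one hu13
    have hordcard : orderOf u ∣ ℓ - 1 := by
      have hu0 : u ≠ 0 := by
        rw [hu]
        simp [ha0, hb0]
      exact orderOf_dvd_of_pow_eq_one (ZMod.pow_card_sub_one_eq_one hu0)
    have hord1 : orderOf u = 1 := by
      rcases (Nat.Prime.eq_one_or_self_of_dvd (by norm_num) _ hord13) with h | h
      · exact h
      · exfalso
        rw [h] at hordcard
        have hℓ2 : 2 ≤ ℓ := hℓ.two_le
        have : ℓ % 13 = 1 := by omega
        exact h13 this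
    have hu1 : u = 1 := orderOf_eq_one_iff.mp hord1
    have : (a : ZMod ℓ) + (b : ZMod ℓ) = 0 := by
      have : (a : ZMod ℓ) = -(b : ZMod ℓ) := by
        have := hu1
        rw [hu] at this
        field_simp at this
        linear_combination -this
      rw [this]; ring
    rw [← ZMod.intCast_zmod_eq_zero_iff_dvd]
    push_cast
    exact this
  refine ⟨part1, ?_⟩
  -- Part 2 : p ∣ v_ℓ(a^13 + b^13)
  rcases eq_or_ne c 0 with hc | hc
  · subst hc
    rw [zero_pow hp.ne_zero, mul_zero] at heq
    rw [heq]
    simp [padicValInt]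
  · have hℓ3 : ¬ (ℓ : ℤ) ∣ 3 := by
      intro h
      have : (ℓ:ℤ) ∣ (3:ℕ) := by exact_mod_cast h
      rw [Int.natCast_dvd_natCast] at this
      exact h3 ((Nat.prime_dvd_prime_iff_eq hℓ (by norm_num)).mp this)
    rw [heq, padicValInt.mul (by norm_num) (pow_ne_zero _ hc)]
    have h30 : padicValInt ℓ 3 = 0 := by
      show padicValNat ℓ ((3:ℤ).natAbs) = 0
      norm_num
      right
      intro h
      exact h3 ((Nat.prime_dvd_prime_iff_eq hℓ (by norm_num)).mp h)
    have hpow : padicValInt ℓ (c ^ p) = p * padicValInt ℓ c := by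
      show padicValNat ℓ ((c ^ p).natAbs) = p * padicValNat ℓ c.natAbs
      rw [Int.natAbs_pow]
      exact padicValNat.pow c.natAbs p
    rw [h30, hpow]
    exact ⟨padicValInt ℓ c, by ring⟩
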